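/- The quotient P_n/K of the polynomial algebra by the constants is a simple module over the Lie algebra D_n = Der_K(P_n) (acting by derivations), and its endomorphism ring End_{D_n}(P_n/K) consists exactly of the scalar multiples of the identity. -/

import Mathlib

open MvPolynomial

/-- The action of a derivation δ of P_n on the quotient module P_n/K
(K = the constants = K-span of 1). -/
noncomputable def derivationQuotientAction (n : ℕ) (K : Type*) [Field K] [CharZero K]
    (δ : Derivation K (MvPolynomial (Fin n) K) (MvPolynomial (Fin n) K)) :
    (MvPolynomial (Fin n) K ⧸ (Submodule.span K {(1 : MvPolynomial (Fin n) K)})) →ₗ[K]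
    (MvPolynomial (Fin n) K ⧸ (Submodule.span K {(1 : MvPolynomial (Fin n) K)})) :=
  Submodule.mapQ _ _ δ.toLinearMap (by
    rw [Submodule.span_le]
    rintro x hx
    simp only [Set.mem_singleton_iff] at hx
    subst hx
    simp [Submodule.mem_comap])

section Helpers

variable {n : ℕ} {K : Type*} [Field K] [CharZero K]

lemma coeff_pderiv' (i : Fin n) (m : Fin n →₀ ℕ) (f : MvPolynomial (Fin n) K) :
    coeff m (pderiv i f) = ((m i : K) + 1) * coeff (m + Finsupp.single i 1) f := by
  classical
  induction f using MvPolynomial.induction_on' with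
  | monomial s a =>
    rw [pderiv_monomial, coeff_monomial, coeff_monomial]
    split_ifs with h1 h2 h2
    · have hs : s i = m i + 1 := by rw [h2]; simp
      rw [hs]; push_cast; ring
    · have hs : s i = 0 := by
        by_contra hs
        exact h2 (by rw [← h1, tsub_add_cancel_of_le
          (Finsupp.single_le_iff.mpr (Nat.one_le_iff_ne_zero.mpr hs))])
      simp [hs]
    · exact absurd (by rw [h2, add_tsub_cancel_right]) h1
    · ring
  | add p q hp hq =>
    simp only [map_add, coeff_add, hp, hq]; ring

lemma coeff_pderiv_sub (i : Fin n) (m : Fin n →₀ ℕ) (p : MvPolynomial (Fin n) K)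
    (hm : m i ≠ 0) :
    coeff (m - Finsupp.single i 1) (pderiv i p) = (m i : K) * coeff m p := by
  rw [coeff_pderiv', tsub_add_cancel_of_le
    (Finsupp.single_le_iff.mpr (Nat.one_le_iff_ne_zero.mpr hm))]
  congr 1
  have h2 : ((m - Finsupp.single i 1 : Fin n →₀ ℕ)) i = m i - 1 := by
    simp [Finsupp.tsub_apply]
  rw [h2]
  have h1 : m i - 1 + 1 = m i := Nat.succ_pred_eq_of_pos (Nat.pos_of_ne_zero hm)
  rw [← h1]; push_cast; ring

lemma mem_span_one_iff (p : MvPolynomial (Fin n) K) :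
    p ∈ Submodule.span K {(1 : MvPolynomial (Fin n) K)} ↔ ∃ c : K, p = C c := by
  rw [Submodule.mem_span_singleton]
  constructor
  · rintro ⟨c, rfl⟩; exact ⟨c, by rw [smul_eq_C_mul, mul_one]⟩
  · rintro ⟨c, rfl⟩; exact ⟨c, by rw [smul_eq_C_mul, mul_one]⟩

lemma span_one_coeff {p : MvPolynomial (Fin n) K}
    (hp : p ∈ Submodule.span K {(1 : MvPolynomial (Fin n) K)})
    {m : Fin n →₀ ℕ} (hm : m ≠ 0) : coeff m p = 0 := by
  obtain ⟨c, rfl⟩ := (mem_span_one_iff p).mp hp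
  rw [coeff_C, if_neg (by exact fun h => hm h.symm)]

lemma mem_span_one_of {p : MvPolynomial (Fin n) K}
    (h : ∀ m : Fin n →₀ ℕ, m ≠ 0 → coeff m p = 0) :
    p ∈ Submodule.span K {(1 : MvPolynomial (Fin n) K)} := by
  rw [mem_span_one_iff]
  refine ⟨coeff 0 p, ?_⟩
  ext m
  by_cases hm : m = 0
  · subst hm; simp
  · rw [h m hm, coeff_C, if_neg (fun hh => hm hh.symm)]

lemma dqa_mk (δ : Derivation K (MvPolynomial (Fin n) K) (MvPolynomial (Fin n) K))
    (p : MvPolynomial (Fin n) K) :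
    derivationQuotientAction n K δ (Submodule.Quotient.mk p) = Submodule.Quotient.mk (δ p) :=
  Submodule.mapQ_apply _ _ _ _

lemma sum_single_eq (i : Fin n) : (Finsupp.single i 1 : Fin n →₀ ℕ).sum (fun _ e => e) = 1 :=
  Finsupp.sum_single_index rfl

lemma eq_C_of_tdeg_zero {h : MvPolynomial (Fin n) K} (hd : h.totalDegree = 0) :
    h = C (coeff 0 h) := by
  ext m
  by_cases hm : m = 0
  · subst hm; simp
  · have hcm : coeff m h = 0 := by
      by_contra hc
      obtain ⟨j, hj⟩ := Finsupp.ne_iff.mp hm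
      exact hj ((totalDegree_eq_zero_iff _ h).mp hd m (mem_support_iff.mpr hc) j)
    rw [hcm, coeff_C, if_neg (fun hh => hm hh.symm)]

lemma const_case (N : Submodule K
      (MvPolynomial (Fin n) K ⧸ Submodule.span K {(1 : MvPolynomial (Fin n) K)}))
    (c : K) (hc : c ≠ 0)
    (hr : ∀ r : MvPolynomial (Fin n) K, Submodule.Quotient.mk (r * C c) ∈ N) : N = ⊤ := by
  rw [Submodule.eq_top_iff']
  intro x
  obtain ⟨q, rfl⟩ := Submodule.Quotient.mk_surjective _ x
  have hmem := hr (c⁻¹ • q)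
  have heq : (c⁻¹ • q) * C c = q := by
    rw [smul_eq_C_mul, mul_right_comm, ← C_mul, inv_mul_cancel₀ hc, C_1, one_mul]
  rwa [heq] at hmem

lemma key_ind (N : Submodule K
      (MvPolynomial (Fin n) K ⧸ Submodule.span K {(1 : MvPolynomial (Fin n) K)}))
    (hN : ∀ (δ : Derivation K (MvPolynomial (Fin n) K) (MvPolynomial (Fin n) K)),
      ∀ m ∈ N, derivationQuotientAction n K δ m ∈ N) :
    ∀ (d : ℕ) (h : MvPolynomial (Fin n) K), h ≠ 0 → h.totalDegree ≤ d →
      (∀ r, Submodule.Quotient.mk (r * h) ∈ N) → N = ⊤ := by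
  intro d
  induction d with
  | zero =>
    intro h hne hdeg hr
    have hd0 : h.totalDegree = 0 := Nat.le_zero.mp hdeg
    have hC := eq_C_of_tdeg_zero hd0
    have hc : coeff 0 h ≠ 0 := fun hc0 => hne (by rw [hC, hc0, C_0])
    exact const_case N _ hc (fun r => hC ▸ hr r)
  | succ d ih =>
    intro h hne hdeg hr
    by_cases hd0 : h.totalDegree = 0
    · have hC := eq_C_of_tdeg_zero hd0
      have hc : coeff 0 h ≠ 0 := fun hc0 => hne (by rw [hC, hc0, C_0])
      exact const_case N _ hc (fun r => hC ▸ hr r)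
    · obtain ⟨m, hmsup, hmsum⟩ := Finset.exists_mem_eq_sup h.support
        (Finset.nonempty_iff_ne_empty.mpr (by rwa [Ne, MvPolynomial.support_eq_empty])) (fun m => m.sum fun _ e => e)
      have hmne : m.sum (fun _ e => e) ≠ 0 := by
        rw [← hmsum]; exact hd0
      have : ∃ i, m i ≠ 0 := by
        by_contra hcon
        push_neg at hcon
        exact hmne (Finset.sum_eq_zero (fun i _ => hcon i))
      obtain ⟨i, hi⟩ := this
      set h' := pderiv i h with hh'
      have hcoeff : coeff (m - Finsupp.single i 1) h' = (m i : K) * coeff m h :=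
        coeff_pderiv_sub i m h hi
      have hne' : h' ≠ 0 := by
        intro h0
        rw [h0, coeff_zero] at hcoeff
        exact (mul_ne_zero (Nat.cast_ne_zero.mpr hi)
          (mem_support_iff.mp hmsup)) hcoeff.symm
      have hdeg' : h'.totalDegree ≤ d := by
        apply Finset.sup_le
        intro m' hm'
        have hcoeff' : coeff (m' + Finsupp.single i 1) h ≠ 0 := by
          intro hz
          have hcp := coeff_pderiv' i m' h
          rw [hz, mul_zero] at hcp
          exact mem_support_iff.mp hm' hcp
        have hle : (m' + Finsupp.single i 1).sum (fun _ e => e) ≤ d + 1 :=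
          le_trans (le_totalDegree (mem_support_iff.mpr hcoeff')) hdeg
        rw [Finsupp.sum_add_index' (fun _ => rfl) (fun _ _ _ => rfl),
          sum_single_eq] at hle
        omega
      have hr' : ∀ r, Submodule.Quotient.mk (r * h') ∈ N := by
        intro r
        have hbase : Submodule.Quotient.mk (1 * h) ∈ N := hr 1
        rw [one_mul] at hbase
        have hinv := hN (r • pderiv i) _ hbase
        rwa [dqa_mk, Derivation.smul_apply, smul_eq_mul] at hinv
      exact ih h' hne' hdeg' hr'

end Helpers

/-- P_n/K is a simple D_n-module and End_{D_n}(P_n/K) = K·id. -/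
theorem quotient_module_simple_and_endomorphisms (n : ℕ) (hn : 0 < n)
    (K : Type*) [Field K] [CharZero K] :
    (∀ N : Submodule K
        (MvPolynomial (Fin n) K ⧸ (Submodule.span K {(1 : MvPolynomial (Fin n) K)})),
      (∀ (δ : Derivation K (MvPolynomial (Fin n) K) (MvPolynomial (Fin n) K)),
        ∀ m ∈ N, derivationQuotientAction n K δ m ∈ N) → N = ⊥ ∨ N = ⊤) ∧
    (∀ f : (MvPolynomial (Fin n) K ⧸ (Submodule.span K {(1 : MvPolynomial (Fin n) K)})) →ₗ[K]
        (MvPolynomial (Fin n) K ⧸ (Submodule.span K {(1 : MvPolynomial (Fin n) K)})),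
      (∀ (δ : Derivation K (MvPolynomial (Fin n) K) (MvPolynomial (Fin n) K)) m,
        f (derivationQuotientAction n K δ m) = derivationQuotientAction n K δ (f m)) →
      ∃ c : K, f = c • LinearMap.id) := by
  constructor
  · -- simplicity
    intro N hNinv
    by_cases hbot : N = ⊥
    · exact Or.inl hbot
    · refine Or.inr ?_
      obtain ⟨x, hxN, hx0⟩ := (Submodule.ne_bot_iff N).mp hbot
      obtain ⟨p, rfl⟩ := Submodule.Quotient.mk_surjective _ x
      have hp : p ∉ Submodule.span K {(1 : MvPolynomial (Fin n) K)} :=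
        fun hmem => hx0 ((Submodule.Quotient.mk_eq_zero _).mpr hmem)
      have hex : ∃ m : Fin n →₀ ℕ, m ≠ 0 ∧ coeff m p ≠ 0 := by
        by_contra hcon
        push_neg at hcon
        exact hp (mem_span_one_of hcon)
      obtain ⟨m, hm0, hmc⟩ := hex
      have hexi : ∃ i, m i ≠ 0 := by
        by_contra hcon
        push_neg at hcon
        exact hm0 (Finsupp.ext hcon)
      obtain ⟨i, hi⟩ := hexi
      have hcoeff : coeff (m - Finsupp.single i 1) (pderiv i p) = (m i : K) * coeff m p :=
        coeff_pderiv_sub i m p hi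
      have hne : pderiv i p ≠ 0 := by
        intro h0
        rw [h0, coeff_zero] at hcoeff
        exact (mul_ne_zero (Nat.cast_ne_zero.mpr hi) hmc) hcoeff.symm
      have hr : ∀ r, Submodule.Quotient.mk (r * pderiv i p) ∈ N := by
        intro r
        have hinv := hNinv (r • pderiv i) _ hxN
        rwa [dqa_mk, Derivation.smul_apply, smul_eq_mul] at hinv
      exact key_ind N hNinv (pderiv i p).totalDegree (pderiv i p) hne le_rfl hr
  · -- endomorphisms
    intro f hf
    set i0 : Fin n := ⟨0, hn⟩ with hi0
    obtain ⟨g, hg⟩ := Submodule.Quotient.mk_surjective _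
      (f (Submodule.Quotient.mk (X i0)))
    -- Step A : pderiv j g = 0 for j ≠ i0
    have hXj : ∀ j : Fin n, j ≠ i0 → pderiv j g = 0 := by
      intro j hj
      have hcomm := hf ((X j : MvPolynomial (Fin n) K) • pderiv j)
        (Submodule.Quotient.mk (X i0))
      rw [dqa_mk, Derivation.smul_apply, smul_eq_mul, pderiv_X_of_ne (Ne.symm hj),
        mul_zero, Submodule.Quotient.mk_zero, map_zero, ← hg, dqa_mk,
        Derivation.smul_apply, smul_eq_mul] at hcomm
      have hmem : (X j : MvPolynomial (Fin n) K) * pderiv j g ∈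
          Submodule.span K {(1 : MvPolynomial (Fin n) K)} :=
        (Submodule.Quotient.mk_eq_zero _).mp hcomm.symm
      obtain ⟨c, hCc⟩ := (mem_span_one_iff _).mp hmem
      have hc0 : c = 0 := by
        have hev := congrArg (eval (0 : Fin n → K)) hCc
        simpa using hev.symm
      rw [hc0, C_0] at hCc
      exact (mul_eq_zero.mp hCc).resolve_left (X_ne_zero j)
    -- Step B : g ≡ X i0 * pderiv i0 g  mod constants
    have hB := hf ((X i0 : MvPolynomial (Fin n) K) • pderiv i0)
      (Submodule.Quotient.mk (X i0))
    rw [dqa_mk, Derivation.smul_apply, smul_eq_mul, pderiv_X_self, mul_one, ← hg,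
      dqa_mk, Derivation.smul_apply, smul_eq_mul] at hB
    have hspanB : g - X i0 * pderiv i0 g ∈
        Submodule.span K {(1 : MvPolynomial (Fin n) K)} :=
      (Submodule.Quotient.eq _).mp hB
    -- Step C : all coefficients of g vanish except at 0 and X i0
    have hclaim : ∀ m : Fin n →₀ ℕ, m ≠ 0 → m ≠ Finsupp.single i0 1 → coeff m g = 0 := by
      intro m hm0 hme
      by_cases hjs : ∃ j, j ≠ i0 ∧ m j ≠ 0
      · obtain ⟨j, hj, hmj⟩ := hjs
        have hcc := coeff_pderiv_sub j m g hmj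
        rw [hXj j hj, coeff_zero] at hcc
        exact (mul_eq_zero.mp hcc.symm).resolve_left (Nat.cast_ne_zero.mpr hmj)
      · push_neg at hjs
        have hmi0 : m i0 ≠ 0 := by
          intro h0
          apply hm0
          ext j
          by_cases hj : j = i0
          · subst hj; exact h0
          · exact hjs j hj
        have hmi1 : m i0 ≠ 1 := by
          intro h1
          apply hme
          ext j
          by_cases hj : j = i0
          · subst hj; simp [h1]
          · rw [hjs j hj, Finsupp.single_apply,
              if_neg (fun (hh : i0 = j) => hj hh.symm)]
        have h0 := span_one_coeff hspanB hm0
        rw [coeff_sub, sub_eq_zero] at h0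
        have hX : coeff m ((X i0 : MvPolynomial (Fin n) K) * pderiv i0 g)
            = (m i0 : K) * coeff m g := by
          classical
          rw [coeff_X_mul', if_pos (Finsupp.mem_support_iff.mpr hmi0),
            coeff_pderiv_sub i0 m g hmi0]
        rw [hX] at h0
        have hzero : ((m i0 : K) - 1) * coeff m g = 0 := by
          rw [sub_mul, one_mul, ← h0, sub_self]
        rcases mul_eq_zero.mp hzero with hl | hr
        · exfalso
          apply hmi1
          have : ((m i0 : K)) = ((1 : ℕ) : K) := by
            rw [Nat.cast_one]; exact sub_eq_zero.mp hl
          exact Nat.cast_injective this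
        · exact hr
    -- Step D : pderiv i0 g is the constant a
    set a := coeff (Finsupp.single i0 1) g with ha
    have hD : pderiv i0 g = C a := by
      ext m
      rw [coeff_pderiv']
      by_cases hm : m = 0
      · subst hm; simp [ha]
      · have h1 : m + Finsupp.single i0 1 ≠ 0 := by
          intro hz
          have hcf := congrArg (fun (f : Fin n →₀ ℕ) => f i0) hz
          simp at hcf
        have h2 : m + Finsupp.single i0 1 ≠ Finsupp.single i0 1 := by
          intro hz
          exact hm (by rwa [add_eq_right] at hz)
        rw [hclaim _ h1 h2, mul_zero, coeff_C, if_neg (fun hh => hm hh.symm)]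
    -- Step E : f is multiplication by a
    refine ⟨a, ?_⟩
    apply LinearMap.ext
    intro x
    obtain ⟨q, rfl⟩ := Submodule.Quotient.mk_surjective _ x
    have hE := hf (q • pderiv i0) (Submodule.Quotient.mk (X i0))
    rw [dqa_mk, Derivation.smul_apply, smul_eq_mul, pderiv_X_self, mul_one, ← hg,
      dqa_mk, Derivation.smul_apply, smul_eq_mul, hD] at hE
    rw [hE]
    have hqa : q * C a = a • q := by rw [smul_eq_C_mul, mul_comm]
    rw [hqa]
    simp [Submodule.Quotient.mk_smul]
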